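/- arXiv:1911.05452 — 4 statements merged into one kernel-verified Lean document; each statement's English description precedes it below -/
import Mathlib

section
/- If ũ : ℝ^n → ℝ is κ-uniformly convex (i.e. ũ(x) - (κ/2)‖x‖² is convex) with κ > 0, and 0 ∈ ∂ũ(0), then for every ȳ with ‖ȳ‖ < κ there exists b with ‖b‖ ≤ ‖ȳ‖/κ and ȳ ∈ ∂ũ(b). Consequently, the ball B_κ(0) is contained in the image ∂ũ(ℝ^n). -/
open scoped RealInnerProductSpace

def SubDiff {n : ℕ} (f : EuclideanSpace ℝ (Fin n) → ℝ) (a : EuclideanSpace ℝ (Fin n)) :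
    Set (EuclideanSpace ℝ (Fin n)) :=
  {y | ∀ x, f a + (inner ℝ y (x - a) : ℝ) ≤ f x}

lemma strong_sub {n : ℕ} {u : EuclideanSpace ℝ (Fin n) → ℝ} {κ : ℝ}
    (hconv : ConvexOn ℝ Set.univ (fun x => u x - κ / 2 * ‖x‖ ^ 2))
    {a y : EuclideanSpace ℝ (Fin n)} (hy : y ∈ SubDiff u a) (x : EuclideanSpace ℝ (Fin n)) :
    u a + (inner ℝ y (x - a) : ℝ) + κ / 2 * ‖x - a‖ ^ 2 ≤ u x := by
  have key : ∀ t : ℝ, 0 < t → t ≤ 1 →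
      (inner ℝ y (x - a) : ℝ) + κ / 2 * (1 - t) * ‖x - a‖ ^ 2 ≤ u x - u a := by
    intro t ht0 ht1
    have hc := hconv.2 (Set.mem_univ a) (Set.mem_univ x) (by linarith : (0:ℝ) ≤ 1 - t)
      ht0.le (by ring)
    have hs := hy ((1 - t) • a + t • x)
    have hinner : (inner ℝ y ((1 - t) • a + t • x - a) : ℝ) = t * (inner ℝ y (x - a) : ℝ) := by
      have : (1 - t) • a + t • x - a = t • (x - a) := by
        rw [smul_sub]; module
      rw [this, real_inner_smul_right]
    have hnorm : ‖(1 - t) • a + t • x‖ ^ 2 =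
        (1 - t) ^ 2 * ‖a‖ ^ 2 + 2 * (1 - t) * t * (inner ℝ a x : ℝ) + t ^ 2 * ‖x‖ ^ 2 := by
      rw [← real_inner_self_eq_norm_sq]
      simp only [inner_add_left, inner_add_right, real_inner_smul_left, real_inner_smul_right]
      rw [real_inner_self_eq_norm_sq, real_inner_self_eq_norm_sq, real_inner_comm x a]
      ring
    have hna : ‖x - a‖ ^ 2 = ‖x‖ ^ 2 - 2 * (inner ℝ a x : ℝ) + ‖a‖ ^ 2 := by
      rw [← real_inner_self_eq_norm_sq]
      simp only [inner_sub_left, inner_sub_right]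
      rw [real_inner_self_eq_norm_sq, real_inner_self_eq_norm_sq, real_inner_comm x a]
      ring
    simp only [hinner] at hs
    simp only [smul_eq_mul] at hc
    rw [hnorm] at hc
    rw [hna]
    nlinarith [hc, hs, mul_pos ht0 ht0]
  have main : (inner ℝ y (x - a) : ℝ) + κ / 2 * ‖x - a‖ ^ 2 ≤ u x - u a := by
    refine le_of_forall_pos_le_add fun ε hε => ?_
    set D := κ / 2 * ‖x - a‖ ^ 2 with hD
    rcases le_or_gt D 0 with hD0 | hD0
    · have := key 1 one_pos le_rfl
      nlinarith
    · set t : ℝ := min 1 (ε / D) with htdef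
      have ht0 : 0 < t := lt_min one_pos (by positivity)
      have ht1 : t ≤ 1 := min_le_left _ _
      have := key t ht0 ht1
      have htD : t * D ≤ ε := by
        calc t * D ≤ (ε / D) * D := by
              apply mul_le_mul_of_nonneg_right (min_le_right _ _) hD0.le
          _ = ε := by field_simp
      nlinarith
  linarith

theorem slope_increasing_property {n : ℕ} (u : EuclideanSpace ℝ (Fin n) → ℝ) (κ : ℝ)
    (hκ : 0 < κ) (hconv : ConvexOn ℝ Set.univ (fun x => u x - κ / 2 * ‖x‖ ^ 2))
    (h0 : (0 : EuclideanSpace ℝ (Fin n)) ∈ SubDiff u 0) :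
    (∀ ybar : EuclideanSpace ℝ (Fin n), ‖ybar‖ < κ →
        ∃ b, ‖b‖ ≤ ‖ybar‖ / κ ∧ ybar ∈ SubDiff u b) ∧
      Metric.ball (0 : EuclideanSpace ℝ (Fin n)) κ ⊆ ⋃ x, SubDiff u x := by
  -- continuity of u
  have hu : Continuous u := by
    have h1 : Continuous fun x : EuclideanSpace ℝ (Fin n) => u x - κ / 2 * ‖x‖ ^ 2 :=
      continuousOn_univ.mp (hconv.continuousOn isOpen_univ)
    have h2 : Continuous fun x : EuclideanSpace ℝ (Fin n) => κ / 2 * ‖x‖ ^ 2 := by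
      continuity
    exact (h1.add h2).congr (fun x => by simp)
  -- coercivity
  have hcoer : ∀ x, u 0 + κ / 2 * ‖x‖ ^ 2 ≤ u x := by
    intro x
    have := strong_sub hconv h0 x
    simpa using this
  have main : ∀ ybar : EuclideanSpace ℝ (Fin n), ‖ybar‖ < κ →
      ∃ b, ‖b‖ ≤ ‖ybar‖ / κ ∧ ybar ∈ SubDiff u b := by
    intro ybar hyb
    set g : EuclideanSpace ℝ (Fin n) → ℝ := fun x => u x - (inner ℝ ybar x : ℝ) with hg
    have hgc : Continuous g := hu.sub (Continuous.inner continuous_const continuous_id)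
    set R : ℝ := 2 * (‖ybar‖ + 1) / κ with hR
    have hR0 : 0 < R := by positivity
    obtain ⟨b, hbmem, hbmin⟩ := (isCompact_closedBall (0 : EuclideanSpace ℝ (Fin n)) R).exists_isMinOn
      ⟨0, Metric.mem_closedBall_self hR0.le⟩ hgc.continuousOn
    have hg0 : g 0 = u 0 := by simp [hg]
    have hb0 : g b ≤ u 0 := by
      have := hbmin (Metric.mem_closedBall_self hR0.le)
      simpa [hg0] using this
    have hglob : ∀ x, g b ≤ g x := by
      intro x
      rcases le_or_gt ‖x‖ R with hx | hx
      · exact hbmin (mem_closedBall_zero_iff.mpr hx)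
      · have h1 : u 0 + κ / 2 * ‖x‖ ^ 2 ≤ u x := hcoer x
        have h2 : (inner ℝ ybar x : ℝ) ≤ ‖ybar‖ * ‖x‖ := real_inner_le_norm _ _
        have h3 : ‖ybar‖ + 1 ≤ κ / 2 * ‖x‖ := by
          have : κ / 2 * R = ‖ybar‖ + 1 := by field_simp [hR]; rw [hR, mul_div_assoc', mul_div_cancel_left₀ _ hκ.ne']
          nlinarith
        have h4 : κ / 2 * ‖x‖ ^ 2 - ‖ybar‖ * ‖x‖ ≥ ‖x‖ := by nlinarith [norm_nonneg x]
        have : u 0 ≤ g x := by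
          simp only [hg]
          nlinarith [norm_nonneg x]
        linarith
    have hsub : ybar ∈ SubDiff u b := by
      intro x
      have := hglob x
      simp only [hg] at this
      have hin : (inner ℝ ybar (x - b) : ℝ) = (inner ℝ ybar x : ℝ) - (inner ℝ ybar b : ℝ) :=
        inner_sub_right _ _ _
      linarith
    refine ⟨b, ?_, hsub⟩
    -- monotonicity bound
    have m1 : u 0 + κ / 2 * ‖b‖ ^ 2 ≤ u b := hcoer b
    have m2 : u b + (inner ℝ ybar ((0 : EuclideanSpace ℝ (Fin n)) - b) : ℝ) + κ / 2 * ‖(0 : EuclideanSpace ℝ (Fin n)) - b‖ ^ 2 ≤ u 0 :=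
      strong_sub hconv hsub 0
    have hz : ((0 : EuclideanSpace ℝ (Fin n)) - b) = -b := zero_sub b
    rw [hz, inner_neg_right, norm_neg] at m2
    have hmono : κ * ‖b‖ ^ 2 ≤ (inner ℝ ybar b : ℝ) := by linarith
    have hcs : (inner ℝ ybar b : ℝ) ≤ ‖ybar‖ * ‖b‖ := real_inner_le_norm _ _
    rcases eq_or_lt_of_le (norm_nonneg b) with h | h
    · rw [← h]; positivity
    · rw [le_div_iff₀ hκ]
      nlinarith
  refine ⟨main, ?_⟩
  intro y hy
  rw [Metric.mem_ball, dist_zero_right] at hy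
  obtain ⟨b, _, hb⟩ := main y hy
  exact Set.mem_iUnion.2 ⟨b, hb⟩
end

section
/- Under the Lagrangian coordinate rotation by angle α, the arctangents of Hessian eigenvalues shift by α: if u is smooth with D²u > -cot(α)·I and ū is the α-rotated potential, then at corresponding points arctan λ̄ᵢ(D²ū) = arctan λᵢ(D²u) - α for each i. In particular, if u solves Σᵢ arctan λᵢ(D²u) = Θ, then ū solves Σᵢ arctan λ̄ᵢ(D²ū) = Θ - nα. -/
open Polynomial Matrix

section Helpers

variable {n : ℕ}

private lemma map_mul_one_aux (U : Matrix (Fin n) (Fin n) ℝ) (hU : U * star U = 1) :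
    U.map (C : ℝ →+* ℝ[X]) * (star U).map C = 1 := by
  rw [← Matrix.map_mul, hU, Matrix.map_one _ (map_zero C) (map_one C)]

private lemma charmatrix_conj (U M : Matrix (Fin n) (Fin n) ℝ) (hU : U * star U = 1) :
    charmatrix (U * M * star U) = U.map C * charmatrix M * (star U).map C := by
  have h1 := map_mul_one_aux U hU
  simp only [charmatrix, RingHom.mapMatrix_apply]
  rw [Matrix.mul_sub, Matrix.sub_mul]
  congr 1
  · rw [(Matrix.scalar_commute (X : ℝ[X]) (fun r => Commute.all _ r) (U.map C)).eq.symm,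
      Matrix.mul_assoc, h1, Matrix.mul_one]
  · rw [Matrix.map_mul, Matrix.map_mul]

private lemma charpoly_conj (U M : Matrix (Fin n) (Fin n) ℝ) (hU : U * star U = 1) :
    (U * M * star U).charpoly = M.charpoly := by
  have h1 := map_mul_one_aux U hU
  have h2 : (U.map (C : ℝ →+* ℝ[X])).det * ((star U).map C).det = 1 := by
    rw [← Matrix.det_mul, h1, Matrix.det_one]
  rw [Matrix.charpoly, charmatrix_conj U M hU, Matrix.det_mul, Matrix.det_mul, Matrix.charpoly]
  linear_combination (charmatrix M).det * h2

private lemma charpoly_diagonal (d : Fin n → ℝ) :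
    (Matrix.diagonal d).charpoly = ∏ i, (X - C (d i)) := by
  have h : charmatrix (Matrix.diagonal d) = Matrix.diagonal fun i => (X : ℝ[X]) - C (d i) := by
    ext i j
    rcases eq_or_ne i j with rfl | hij
    · rw [charmatrix_apply_eq, Matrix.diagonal_apply_eq, Matrix.diagonal_apply_eq]
    · rw [charmatrix_apply_ne _ _ _ hij, Matrix.diagonal_apply_ne _ hij,
        Matrix.diagonal_apply_ne _ hij, map_zero, neg_zero]
  rw [Matrix.charpoly, h, Matrix.det_diagonal]

private lemma herm_charpoly {M : Matrix (Fin n) (Fin n) ℝ} (hM : M.IsHermitian) :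
    M.charpoly = ∏ i, (X - C (hM.eigenvalues i)) := by
  have hU : (hM.eigenvectorUnitary : Matrix (Fin n) (Fin n) ℝ)
      * star (hM.eigenvectorUnitary : Matrix (Fin n) (Fin n) ℝ) = 1 :=
    Unitary.mul_star_self_of_mem hM.eigenvectorUnitary.prop
  have hd : (Matrix.diagonal (RCLike.ofReal ∘ hM.eigenvalues) : Matrix (Fin n) (Fin n) ℝ)
      = Matrix.diagonal hM.eigenvalues := by
    simp [RCLike.ofReal_real_eq_id]
  conv_lhs => rw [hM.spectral_theorem, Unitary.conjStarAlgAut_apply]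
  rw [hd, charpoly_conj _ _ hU, _root_.charpoly_diagonal]

private lemma exists_perm_of_list_perm (f g : Fin n → ℝ)
    (h : (List.ofFn f).Perm (List.ofFn g)) :
    ∃ σ : Equiv.Perm (Fin n), ∀ i, f i = g (σ i) := by
  have h1 := Tuple.monotone_sort f
  have h2 := Tuple.monotone_sort g
  have hperm : (List.ofFn (f ∘ Tuple.sort f)).Perm (List.ofFn (g ∘ Tuple.sort g)) :=
    ((Tuple.sort f).ofFn_comp_perm f).trans (h.trans ((Tuple.sort g).ofFn_comp_perm g).symm)
  have heq : f ∘ Tuple.sort f = g ∘ Tuple.sort g :=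
    List.ofFn_injective (List.Perm.eq_of_sortedLE h1.sortedLE_ofFn h2.sortedLE_ofFn hperm)
  refine ⟨((Tuple.sort f).symm).trans (Tuple.sort g), fun i => ?_⟩
  have := congrFun heq ((Tuple.sort f).symm i)
  simpa using this

private lemma exists_perm_of_charpoly {M : Matrix (Fin n) (Fin n) ℝ} (hM : M.IsHermitian)
    (d : Fin n → ℝ) (h : M.charpoly = ∏ i, (X - C (d i))) :
    ∃ σ : Equiv.Perm (Fin n), ∀ i, hM.eigenvalues i = d (σ i) := by
  have e1 : ∀ f : Fin n → ℝ, ∏ i, (X - C (f i))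
      = (Multiset.map (fun a : ℝ => X - C a) (Multiset.map f Finset.univ.val)).prod := by
    intro f; rw [Multiset.map_map]; rfl
  have key : Multiset.map hM.eigenvalues Finset.univ.val = Multiset.map d Finset.univ.val := by
    have hr := congrArg Polynomial.roots ((herm_charpoly hM).symm.trans h)
    rwa [e1 hM.eigenvalues, e1 d, Polynomial.roots_multiset_prod_X_sub_C,
      Polynomial.roots_multiset_prod_X_sub_C] at hr
  have hofn : ∀ f : Fin n → ℝ, Multiset.map f Finset.univ.val = ↑(List.ofFn f) := by
    intro f
    rw [List.ofFn_eq_map]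
    rfl
  rw [hofn, hofn, Multiset.coe_eq_coe] at key
  exact exists_perm_of_list_perm _ _ key

private lemma arctan_shift {α t : ℝ} (h0 : 0 < α) (hπ : α < Real.pi / 2)
    (ht : 0 < Real.cos α + Real.sin α * t) :
    Real.arctan ((Real.cos α * t - Real.sin α) / (Real.cos α + Real.sin α * t))
      = Real.arctan t - α := by
  have hpi := Real.pi_pos
  have hc : 0 < Real.cos α := Real.cos_pos_of_mem_Ioo ⟨by linarith, hπ⟩
  have hs : 0 < Real.sin α := Real.sin_pos_of_pos_of_lt_pi h0 (by linarith)
  have hsq : (0:ℝ) < Real.sqrt (1 + t ^ 2) := Real.sqrt_pos.2 (by positivity)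
  -- lower bound on arctan t
  have harc : Real.arctan (Real.cos α / Real.sin α) = Real.pi / 2 - α := by
    have : Real.cos α / Real.sin α = Real.tan (Real.pi / 2 - α) := by
      rw [Real.tan_pi_div_two_sub, Real.tan_eq_sin_div_cos, inv_div]
    rw [this, Real.arctan_tan (by linarith) (by linarith)]
  have hlt : -(Real.cos α / Real.sin α) < t := by
    rw [← neg_div]
    exact (div_lt_iff₀ hs).2 (by nlinarith)
  have hlb : α - Real.pi / 2 < Real.arctan t := by
    have := Real.arctan_strictMono hlt
    rw [Real.arctan_neg, harc] at this
    linarith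
  have hub : Real.arctan t - α < Real.pi / 2 := by
    have := Real.arctan_lt_pi_div_two t
    linarith
  -- tangent of the shifted angle
  have hcos : Real.cos (Real.arctan t - α)
      = (Real.cos α + Real.sin α * t) / Real.sqrt (1 + t ^ 2) := by
    rw [Real.cos_sub, Real.sin_arctan, Real.cos_arctan]
    field_simp
  have hsin : Real.sin (Real.arctan t - α)
      = (Real.cos α * t - Real.sin α) / Real.sqrt (1 + t ^ 2) := by
    rw [Real.sin_sub, Real.sin_arctan, Real.cos_arctan]
    field_simp
  have htan : Real.tan (Real.arctan t - α)
      = (Real.cos α * t - Real.sin α) / (Real.cos α + Real.sin α * t) := by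
    rw [Real.tan_eq_sin_div_cos, hcos, hsin, div_div_div_cancel_right₀]
    exact hsq.ne'
  rw [← htan, Real.arctan_tan (by linarith) hub]

private lemma conj_mul_conj (U M N : Matrix (Fin n) (Fin n) ℝ) (hsU : star U * U = 1) :
    (U * M * star U) * (U * N * star U) = U * (M * N) * star U := by
  simp only [Matrix.mul_assoc]
  rw [← Matrix.mul_assoc (star U) U (N * star U), hsU, Matrix.one_mul]

end Helpers

theorem rotated_hessian_arctan_shift {n : ℕ} (α : ℝ) (hα : α ∈ Set.Ioo 0 (Real.pi / 2))
    (A : Matrix (Fin n) (Fin n) ℝ) (hA : A.IsHermitian)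
    (hlow : (A + (Real.cos α / Real.sin α) • (1 : Matrix (Fin n) (Fin n) ℝ)).PosDef)
    (Abar : Matrix (Fin n) (Fin n) ℝ)
    (hAbar : Abar = (Real.cos α • A - Real.sin α • 1) *
      (Real.cos α • (1 : Matrix (Fin n) (Fin n) ℝ) + Real.sin α • A)⁻¹)
    (hAbarH : Abar.IsHermitian) (Θ : ℝ) :
    (∃ σ : Equiv.Perm (Fin n), ∀ i,
        Real.arctan (hAbarH.eigenvalues i) = Real.arctan (hA.eigenvalues (σ i)) - α) ∧
      ((∑ i, Real.arctan (hA.eigenvalues i) = Θ) →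
        ∑ i, Real.arctan (hAbarH.eigenvalues i) = Θ - n * α) := by
  obtain ⟨hα0, hαπ⟩ := hα
  have hpi := Real.pi_pos
  have hc : 0 < Real.cos α := Real.cos_pos_of_mem_Ioo ⟨by linarith, hαπ⟩
  have hs : 0 < Real.sin α := Real.sin_pos_of_pos_of_lt_pi hα0 (by linarith)
  set c := Real.cos α with hc_def
  set s := Real.sin α with hs_def
  set U : Matrix (Fin n) (Fin n) ℝ := (hA.eigenvectorUnitary : Matrix (Fin n) (Fin n) ℝ)
    with hU_def
  have hUs : U * star U = 1 := Unitary.mul_star_self_of_mem hA.eigenvectorUnitary.prop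
  have hsU : star U * U = 1 := Unitary.star_mul_self_of_mem hA.eigenvectorUnitary.prop
  set lam := hA.eigenvalues with hlam_def
  have hspec : A = U * Matrix.diagonal lam * star U := by
    have hd : (Matrix.diagonal (RCLike.ofReal ∘ lam) : Matrix (Fin n) (Fin n) ℝ)
        = Matrix.diagonal lam := by
      simp [RCLike.ofReal_real_eq_id]
    conv_lhs => rw [hA.spectral_theorem, Unitary.conjStarAlgAut_apply]
    rw [hd]
  -- eigenvalue positivity
  have hpos : ∀ i, 0 < c + s * lam i := by
    intro i
    have hv := hA.mulVec_eigenvectorBasis i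
    set v : Fin n → ℝ := ⇑(hA.eigenvectorBasis i) with hv_def
    have hvne : v ≠ 0 := by
      intro h0
      have hnorm := hA.eigenvectorBasis.orthonormal.1 i
      have hz : ∀ j, hA.eigenvectorBasis i j = (0:ℝ) := fun j => congrFun h0 j
      rw [EuclideanSpace.norm_eq] at hnorm
      simp only [hz] at hnorm
      norm_num at hnorm
    have hq := hlow.dotProduct_mulVec_pos hvne
    have hmv : (A + (c/s) • (1 : Matrix (Fin n) (Fin n) ℝ)) *ᵥ v = (lam i + c/s) • v := by
      rw [Matrix.add_mulVec, hv, Matrix.smul_mulVec, Matrix.one_mulVec, add_smul]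
    rw [hmv] at hq
    have hstar : star v = v := by
      funext j; exact star_trivial _
    rw [hstar, dotProduct_smul, smul_eq_mul] at hq
    have hvv : 0 ≤ dotProduct v v :=
      Finset.sum_nonneg fun j _ => mul_self_nonneg _
    have hlam_pos : 0 < lam i + c / s := by
      rcases lt_or_ge 0 (lam i + c/s) with h | h
      · exact h
      · exfalso
        nlinarith
    have := mul_pos hs hlam_pos
    rw [mul_add] at this
    rw [mul_div_cancel₀ _ hs.ne'] at this
    linarith
  -- matrix computations
  have hM1 : c • (1 : Matrix (Fin n) (Fin n) ℝ) + s • A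
      = U * Matrix.diagonal (fun i => c + s * lam i) * star U := by
    have hd : Matrix.diagonal (fun i => c + s * lam i)
        = c • (1 : Matrix (Fin n) (Fin n) ℝ) + s • Matrix.diagonal lam := by
      ext i j
      rcases eq_or_ne i j with rfl | hij
      · simp [Matrix.diagonal_apply_eq, Matrix.one_apply_eq]
      · simp [Matrix.diagonal_apply_ne _ hij, Matrix.one_apply_ne hij]
    rw [hd, Matrix.mul_add, Matrix.add_mul, mul_smul_comm, mul_smul_comm,
      smul_mul_assoc, smul_mul_assoc, Matrix.mul_one, hUs, ← hspec]
  have hM2 : c • A - s • (1 : Matrix (Fin n) (Fin n) ℝ)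
      = U * Matrix.diagonal (fun i => c * lam i - s) * star U := by
    have hd : Matrix.diagonal (fun i => c * lam i - s)
        = c • Matrix.diagonal lam - s • (1 : Matrix (Fin n) (Fin n) ℝ) := by
      ext i j
      rcases eq_or_ne i j with rfl | hij
      · simp [Matrix.diagonal_apply_eq, Matrix.one_apply_eq]
      · simp [Matrix.diagonal_apply_ne _ hij, Matrix.one_apply_ne hij]
    rw [hd, Matrix.mul_sub, Matrix.sub_mul, mul_smul_comm, mul_smul_comm,
      smul_mul_assoc, smul_mul_assoc, Matrix.mul_one, hUs, ← hspec]
  have hInv : (c • (1 : Matrix (Fin n) (Fin n) ℝ) + s • A)⁻¹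
      = U * Matrix.diagonal (fun i => (c + s * lam i)⁻¹) * star U := by
    apply Matrix.inv_eq_right_inv
    rw [hM1, conj_mul_conj _ _ _ hsU, Matrix.diagonal_mul_diagonal]
    have : (fun i => (c + s * lam i) * (c + s * lam i)⁻¹) = fun _ : Fin n => (1:ℝ) :=
      funext fun i => mul_inv_cancel₀ (hpos i).ne'
    rw [this, Matrix.diagonal_one, Matrix.mul_one, hUs]
  have hAbarDiag : Abar
      = U * Matrix.diagonal (fun i => (c * lam i - s) * (c + s * lam i)⁻¹) * star U := by
    rw [hAbar, hM2, hInv, conj_mul_conj _ _ _ hsU, Matrix.diagonal_mul_diagonal]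
  have hchar : Abar.charpoly = ∏ i, (X - C ((c * lam i - s) * (c + s * lam i)⁻¹)) := by
    rw [hAbarDiag, charpoly_conj _ _ hUs, _root_.charpoly_diagonal]
  obtain ⟨σ, hσ⟩ := exists_perm_of_charpoly hAbarH _ hchar
  have hshift : ∀ i, Real.arctan (hAbarH.eigenvalues i)
      = Real.arctan (lam (σ i)) - α := by
    intro i
    rw [hσ i, ← div_eq_mul_inv]
    exact arctan_shift hα0 hαπ (hpos (σ i))
  refine ⟨⟨σ, hshift⟩, fun hsum => ?_⟩
  calc ∑ i, Real.arctan (hAbarH.eigenvalues i)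
      = ∑ i, (Real.arctan (lam (σ i)) - α) := Finset.sum_congr rfl fun i _ => hshift i
    _ = (∑ i, Real.arctan (lam (σ i))) - n * α := by
        rw [Finset.sum_sub_distrib, Finset.sum_const, Finset.card_univ, Fintype.card_fin,
          nsmul_eq_mul]
    _ = (∑ i, Real.arctan (lam i)) - n * α := by
        rw [Equiv.sum_comp σ (fun i => Real.arctan (lam i))]
    _ = Θ - n * α := by rw [hsum]
end

section
/- Eigenvalue bound for the rotated Hessian: if A is a real symmetric n×n matrix with A ≥ (-cot α + δ)I for some δ > 0 and α ∈ (0, π/2), then the symmetric matrix Ā = (sin(α)I + cos(α)A)(cos(α)I + sin(α)A)^{-1} is well defined, and its eigenvalues satisfy -K(α, δ) ≤ λ̄ᵢ ≤ cot α for a constant K(α, δ) depending only on α and δ. For α = π/4 and δ = cot α = 1 (i.e. A ≥ 0), one gets -I ≤ Ā ≤ I. -/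
open Real

section Aux
open Matrix

section aux
variable {n : ℕ}

lemma psd_smul {M : Matrix (Fin n) (Fin n) ℝ} (hM : M.PosSemidef) {c : ℝ} (hc : 0 ≤ c) :
    (c • M).PosSemidef := by
  refine posSemidef_iff_dotProduct_mulVec.mpr ⟨?_, fun x => ?_⟩
  · unfold Matrix.IsHermitian
    rw [conjTranspose_smul, star_trivial, hM.1]
  · rw [smul_mulVec, dotProduct_smul, smul_eq_mul]
    exact mul_nonneg hc (hM.dotProduct_mulVec_nonneg x)

lemma smul_one_posDef {c : ℝ} (hc : 0 < c) : (c • (1 : Matrix (Fin n) (Fin n) ℝ)).PosDef := by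
  refine posDef_iff_dotProduct_mulVec.mpr ⟨?_, fun x hx => ?_⟩
  · unfold Matrix.IsHermitian
    rw [conjTranspose_smul, star_trivial, conjTranspose_one]
  · rw [smul_mulVec, one_mulVec, dotProduct_smul, smul_eq_mul]
    exact mul_pos hc (by simpa using dotProduct_star_self_pos_iff.mpr hx)

lemma key {B : Matrix (Fin n) (Fin n) ℝ} {t : ℝ} (ht : 0 < t)
    (h : (B - t • 1).PosSemidef) :
    B.PosDef ∧ (t⁻¹ • (1 : Matrix (Fin n) (Fin n) ℝ) - B⁻¹).PosSemidef := by
  have hBpd : B.PosDef := by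
    have hEq : B - t • 1 + t • 1 = B := sub_add_cancel B (t • 1)
    exact hEq ▸ (Matrix.PosDef.posSemidef_add h (smul_one_posDef ht))
  refine ⟨hBpd, posSemidef_iff_dotProduct_mulVec.mpr ⟨?_, fun x => ?_⟩⟩
  · unfold Matrix.IsHermitian
    rw [conjTranspose_sub, conjTranspose_smul, star_trivial, conjTranspose_one,
      hBpd.isHermitian.inv]
  · have hdet : IsUnit B.det := isUnit_iff_ne_zero.mpr (ne_of_gt hBpd.det_pos)
    set y := B⁻¹ *ᵥ x with hy
    have hxy : B *ᵥ y = x := by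
      rw [hy, mulVec_mulVec, mul_nonsing_inv B hdet, one_mulVec]
    have h1 : x ⬝ᵥ y = y ⬝ᵥ (B *ᵥ y) := by rw [← hxy]; exact dotProduct_comm _ _
    have h2 : t * (y ⬝ᵥ y) ≤ y ⬝ᵥ (B *ᵥ y) := by
      have := h.dotProduct_mulVec_nonneg y
      rw [star_trivial, sub_mulVec, dotProduct_sub, smul_mulVec, one_mulVec,
        dotProduct_smul, smul_eq_mul] at this
      linarith
    have h3 : (x ⬝ᵥ y) ^ 2 ≤ (x ⬝ᵥ x) * (y ⬝ᵥ y) := by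
      have := Finset.sum_mul_sq_le_sq_mul_sq Finset.univ x y
      simpa [dotProduct, sq] using this
    have h4 : 0 ≤ y ⬝ᵥ y := by simpa using dotProduct_star_self_nonneg y
    have h5 : 0 ≤ x ⬝ᵥ x := by simpa using dotProduct_star_self_nonneg x
    rw [star_trivial, sub_mulVec, smul_mulVec, one_mulVec, dotProduct_sub,
      dotProduct_smul, smul_eq_mul, ← hy]
    have hp : 0 ≤ x ⬝ᵥ y := le_trans (by positivity) (h1 ▸ h2)
    rcases eq_or_lt_of_le hp with hp0 | hp0
    · have : 0 ≤ t⁻¹ * (x ⬝ᵥ x) := by positivity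
      linarith
    · have hle : t * (x ⬝ᵥ y) ≤ x ⬝ᵥ x := by nlinarith [h1 ▸ h2]
      have e1 : t⁻¹ * (t * (x ⬝ᵥ y)) = x ⬝ᵥ y := by
        field_simp
      nlinarith [mul_le_mul_of_nonneg_left hle (inv_pos.mpr ht).le]
end aux

lemma main {n : ℕ} (c s t K : ℝ) (hs : 0 < s) (hc : 0 ≤ c) (hcs : c ^ 2 + s ^ 2 = 1)
    (ht : 0 < t) (hK : t⁻¹ ≤ c + s * K) (A : Matrix (Fin n) (Fin n) ℝ)
    (hpsd : (c • (1 : Matrix (Fin n) (Fin n) ℝ) + s • A - t • 1).PosSemidef) :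
    IsUnit (c • (1 : Matrix (Fin n) (Fin n) ℝ) + s • A) ∧
    ((c / s) • (1 : Matrix (Fin n) (Fin n) ℝ) -
      (c • A - s • 1) * (c • 1 + s • A)⁻¹).PosSemidef ∧
    ((c • A - s • 1) * (c • 1 + s • A)⁻¹ + K • (1 : Matrix (Fin n) (Fin n) ℝ)).PosSemidef := by
  obtain ⟨hBpd, hinv⟩ := key ht hpsd
  set B := c • (1 : Matrix (Fin n) (Fin n) ℝ) + s • A with hB
  have hdet : IsUnit B.det := isUnit_iff_ne_zero.mpr (ne_of_gt hBpd.det_pos)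
  have hME : (c • A - s • (1 : Matrix (Fin n) (Fin n) ℝ)) = (c / s) • B - s⁻¹ • 1 := by
    rw [hB]
    match_scalars
    · field_simp
    · field_simp
      linear_combination -hcs
  have hM : (c • A - s • (1 : Matrix (Fin n) (Fin n) ℝ)) * B⁻¹
      = (c / s) • (1 : Matrix (Fin n) (Fin n) ℝ) - s⁻¹ • B⁻¹ := by
    rw [hME, sub_mul, smul_mul, smul_mul, mul_nonsing_inv B hdet, one_mul]
  refine ⟨hBpd.isUnit, ?_, ?_⟩
  · rw [hM, sub_sub_cancel]
    exact psd_smul hBpd.inv.posSemidef (inv_nonneg.mpr hs.le)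
  · rw [hM]
    have e : (c / s) • (1 : Matrix (Fin n) (Fin n) ℝ) - s⁻¹ • B⁻¹ + K • 1
        = s⁻¹ • (t⁻¹ • (1 : Matrix (Fin n) (Fin n) ℝ) - B⁻¹)
          + ((c + s * K - t⁻¹) / s) • 1 := by
      match_scalars
      · field_simp
        ring
      · ring
    rw [e]
    refine (psd_smul hinv (inv_nonneg.mpr hs.le)).add
      (psd_smul Matrix.PosSemidef.one (div_nonneg (by linarith) hs.le))

end Aux

open Matrix in
theorem rotated_hessian_eigenvalue_bound (α δ : ℝ) (hα : α ∈ Set.Ioo 0 (π / 2)) (hδ : 0 < δ) :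
    (∃ K : ℝ, ∀ (n : ℕ) (A : Matrix (Fin n) (Fin n) ℝ), A.IsHermitian →
      (A + (cos α / sin α - δ) • (1 : Matrix (Fin n) (Fin n) ℝ)).PosSemidef →
      IsUnit (cos α • (1 : Matrix (Fin n) (Fin n) ℝ) + sin α • A) ∧
        ((cos α / sin α) • (1 : Matrix (Fin n) (Fin n) ℝ) -
          (cos α • A - sin α • 1) * (cos α • 1 + sin α • A)⁻¹).PosSemidef ∧
        ((cos α • A - sin α • 1) * (cos α • 1 + sin α • A)⁻¹ +
          K • (1 : Matrix (Fin n) (Fin n) ℝ)).PosSemidef) ∧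
    (∀ (n : ℕ) (A : Matrix (Fin n) (Fin n) ℝ), A.IsHermitian → A.PosSemidef →
      ((1 : Matrix (Fin n) (Fin n) ℝ) -
        (cos (π / 4) • A - sin (π / 4) • 1) * (cos (π / 4) • 1 + sin (π / 4) • A)⁻¹).PosSemidef ∧
      ((cos (π / 4) • A - sin (π / 4) • 1) * (cos (π / 4) • 1 + sin (π / 4) • A)⁻¹ +
        (1 : Matrix (Fin n) (Fin n) ℝ)).PosSemidef) := by
  obtain ⟨hα0, hα2⟩ := hα
  have hpi := Real.pi_pos
  have hs : 0 < sin α := Real.sin_pos_of_pos_of_lt_pi hα0 (by linarith)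
  have hc : 0 ≤ cos α := le_of_lt (Real.cos_pos_of_mem_Ioo ⟨by linarith, hα2⟩)
  have hcs : cos α ^ 2 + sin α ^ 2 = 1 := Real.cos_sq_add_sin_sq α
  constructor
  · refine ⟨(sin α ^ 2 * δ)⁻¹, fun n A hA hApsd => ?_⟩
    have ht : 0 < sin α * δ := mul_pos hs hδ
    have hK : (sin α * δ)⁻¹ ≤ cos α + sin α * (sin α ^ 2 * δ)⁻¹ := by
      have h1 : sin α * (sin α ^ 2 * δ)⁻¹ = (sin α * δ)⁻¹ := by
        field_simp
      rw [h1]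
      linarith
    have hpsd : (cos α • (1 : Matrix (Fin n) (Fin n) ℝ) + sin α • A
        - (sin α * δ) • 1).PosSemidef := by
      have hEq : cos α • (1 : Matrix (Fin n) (Fin n) ℝ) + sin α • A - (sin α * δ) • 1
          = sin α • (A + (cos α / sin α - δ) • 1) := by
        match_scalars <;> field_simp <;> ring
      exact hEq ▸ psd_smul hApsd hs.le
    exact main _ _ _ _ hs hc hcs ht hK A hpsd
  · intro n A hA hApsd
    rw [Real.cos_pi_div_four, Real.sin_pi_div_four]
    have h2 : (0:ℝ) < Real.sqrt 2 := by positivity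
    have hq : Real.sqrt 2 * Real.sqrt 2 = 2 := Real.mul_self_sqrt (by norm_num)
    set r : ℝ := Real.sqrt 2 / 2 with hr
    have hrpos : 0 < r := by positivity
    have hrcs : r ^ 2 + r ^ 2 = 1 := by rw [hr]; nlinarith
    have hK : r⁻¹ ≤ r + r * 1 := by
      have h1 : r⁻¹ = r + r * 1 := by
        rw [mul_one]
        field_simp
        nlinarith
      exact le_of_eq h1
    have hpsd : (r • (1 : Matrix (Fin n) (Fin n) ℝ) + r • A - r • 1).PosSemidef := by
      have h1 : r • (1 : Matrix (Fin n) (Fin n) ℝ) + r • A - r • 1 = r • A := by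
        abel
      rw [h1]
      exact psd_smul hApsd hrpos.le
    obtain ⟨_, hg1, hg2⟩ := main r r r 1 hrpos hrpos.le hrcs hrpos hK A hpsd
    have hrr : r / r = 1 := div_self hrpos.ne'
    rw [hrr, one_smul] at hg1
    rw [one_smul] at hg2
    exact ⟨hg1, hg2⟩
end

section
/- Concavity of the special Lagrangian operator on convex matrices: the function F(A) = Σᵢ arctan λᵢ(A) is concave on the set of positive semidefinite symmetric n×n matrices. -/
noncomputable def sLagOp {n : ℕ} (A : Matrix (Fin n) (Fin n) ℝ) : ℝ :=
  if h : A.IsHermitian then ∑ i, Real.arctan (h.eigenvalues i) else 0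

open Real Matrix Finset
open scoped RealInnerProductSpace

lemma psd_smul_s16 {n : ℕ} {A : Matrix (Fin n) (Fin n) ℝ} (hA : A.PosSemidef) {t : ℝ}
    (ht : 0 ≤ t) : (t • A).PosSemidef := by
  refine ⟨?_, fun x => ?_⟩
  · show (t • A)ᴴ = t • A
    rw [Matrix.conjTranspose_smul, hA.1.eq]
    simp
  have := mul_nonneg ht (hA.2 x)
  convert this using 1
  simp only [Finsupp.sum, Finset.mul_sum, Matrix.smul_apply, smul_eq_mul]
  exact Finset.sum_congr rfl fun i _ => Finset.sum_congr rfl fun j _ => by ring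

lemma arctan_concaveOn : ConcaveOn ℝ (Set.Ici (0:ℝ)) Real.arctan := by
  have hderiv : ∀ x : ℝ, HasDerivAt (fun y : ℝ => 1 / (1 + y ^ 2)) (-(2*x) / (1 + x^2)^2) x := by
    intro x
    have h1 : HasDerivAt (fun y : ℝ => 1 + y ^ 2) (2 * x) x := by
      simpa using (hasDerivAt_pow 2 x).const_add 1
    have h2 : (1 : ℝ) + x ^ 2 ≠ 0 := by positivity
    rw [show (fun y : ℝ => 1 / (1 + y ^ 2)) = (fun y : ℝ => 1 + y ^ 2)⁻¹ from by ext y; simp [one_div]]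
    exact h1.inv h2
  apply concaveOn_of_deriv2_nonpos (convex_Ici 0) Real.continuous_arctan.continuousOn
  · exact fun x _ => Real.differentiable_arctan.differentiableAt.differentiableWithinAt
  · intro x _
    rw [Real.deriv_arctan]
    exact ((hderiv x).differentiableAt).differentiableWithinAt
  · intro x hx
    rw [interior_Ici] at hx
    have : deriv^[2] Real.arctan x = -(2*x) / (1 + x^2)^2 := by
      rw [Function.iterate_succ, Function.iterate_one, Function.comp_apply, Real.deriv_arctan]
      exact (hderiv x).deriv
    rw [this]
    apply div_nonpos_of_nonpos_of_nonneg
    · nlinarith [le_of_lt (Set.mem_Ioi.mp hx)]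
    · positivity

lemma toEuclideanLin_eigen {n : ℕ} {A : Matrix (Fin n) (Fin n) ℝ} (hA : A.IsHermitian)
    (j : Fin n) :
    Matrix.toEuclideanLin A (hA.eigenvectorBasis j) =
      hA.eigenvalues j • hA.eigenvectorBasis j := by
  have := hA.mulVec_eigenvectorBasis j
  apply (WithLp.equiv 2 (Fin n → ℝ)).injective
  simp only [Matrix.toEuclideanLin_apply, Equiv.apply_symm_apply]
  ext i
  have := congrFun this i
  simpa using this

lemma quad_expand {n : ℕ} {A : Matrix (Fin n) (Fin n) ℝ} (hA : A.IsHermitian)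
    (x : EuclideanSpace ℝ (Fin n)) :
    ⟪x, Matrix.toEuclideanLin A x⟫ =
      ∑ j, hA.eigenvalues j * ⟪hA.eigenvectorBasis j, x⟫ ^ 2 := by
  set v := hA.eigenvectorBasis with hv
  have hx : Matrix.toEuclideanLin A x = ∑ j, (⟪v j, x⟫ * hA.eigenvalues j) • v j := by
    conv_lhs => rw [← v.sum_repr' x]
    rw [map_sum]
    refine Finset.sum_congr rfl fun j _ => ?_
    rw [_root_.map_smul, toEuclideanLin_eigen hA j, smul_smul]
  rw [hx, inner_sum]
  refine Finset.sum_congr rfl fun j _ => ?_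
  rw [real_inner_smul_right, real_inner_comm x (v j)]
  ring

lemma key_ineq {n : ℕ} {A : Matrix (Fin n) (Fin n) ℝ} (hA : A.PosSemidef)
    (u : OrthonormalBasis (Fin n) ℝ (EuclideanSpace ℝ (Fin n))) :
    ∑ j, Real.arctan (hA.1.eigenvalues j) ≤
      ∑ i, Real.arctan ⟪u i, Matrix.toEuclideanLin A (u i)⟫ := by
  set v := hA.1.eigenvectorBasis
  set lam := hA.1.eigenvalues
  set S : Fin n → Fin n → ℝ := fun i j => ⟪v j, u i⟫ ^ 2 with hS
  have hSnn : ∀ i j, 0 ≤ S i j := fun i j => sq_nonneg _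
  have hrow : ∀ i, ∑ j, S i j = 1 := by
    intro i
    have := v.sum_inner_mul_inner (u i) (u i)
    rw [real_inner_self_eq_norm_sq, u.orthonormal.1 i] at this
    simp only [one_pow] at this
    calc ∑ j, S i j = ∑ j, ⟪u i, v j⟫ * ⟪v j, u i⟫ := by
          refine Finset.sum_congr rfl fun j _ => ?_
          simp only [hS]; rw [sq, real_inner_comm (u i) (v j)]
      _ = 1 := this
  have hcol : ∀ j, ∑ i, S i j = 1 := by
    intro j
    have := u.sum_inner_mul_inner (v j) (v j)
    rw [real_inner_self_eq_norm_sq, v.orthonormal.1 j] at this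
    simp only [one_pow] at this
    calc ∑ i, S i j = ∑ i, ⟪v j, u i⟫ * ⟪u i, v j⟫ := by
          refine Finset.sum_congr rfl fun i _ => ?_
          simp only [hS]; rw [sq, real_inner_comm (u i) (v j)]
      _ = 1 := this
  have hquad : ∀ i, ⟪u i, Matrix.toEuclideanLin A (u i)⟫ = ∑ j, S i j * lam j := by
    intro i
    rw [quad_expand hA.1 (u i)]
    exact Finset.sum_congr rfl fun j _ => by rw [hS]; ring
  have hlam : ∀ j, lam j ∈ Set.Ici (0:ℝ) := fun j => hA.eigenvalues_nonneg j
  calc ∑ j, Real.arctan (lam j) = ∑ j, (∑ i, S i j) * Real.arctan (lam j) := by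
        refine Finset.sum_congr rfl fun j _ => by rw [hcol j, one_mul]
    _ = ∑ i, ∑ j, S i j * Real.arctan (lam j) := by
        rw [Finset.sum_comm]
        exact Finset.sum_congr rfl fun j _ => by rw [Finset.sum_mul]
    _ ≤ ∑ i, Real.arctan (∑ j, S i j * lam j) := by
        refine Finset.sum_le_sum fun i _ => ?_
        have := arctan_concaveOn.le_map_sum (t := Finset.univ) (w := S i) (p := lam)
          (fun j _ => hSnn i j) (hrow i) (fun j _ => hlam j)
        simpa using this
    _ = ∑ i, Real.arctan ⟪u i, Matrix.toEuclideanLin A (u i)⟫ := by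
        refine Finset.sum_congr rfl fun i _ => by rw [hquad i]

theorem sLag_concave_on_psd {n : ℕ} (A B : Matrix (Fin n) (Fin n) ℝ)
    (hA : A.PosSemidef) (hB : B.PosSemidef) (t : ℝ) (ht : t ∈ Set.Icc (0 : ℝ) 1) :
    t * sLagOp A + (1 - t) * sLagOp B ≤ sLagOp (t • A + (1 - t) • B) := by
  obtain ⟨ht0, ht1⟩ := ht
  have ht1' : (0:ℝ) ≤ 1 - t := by linarith
  have hC : (t • A + (1 - t) • B).PosSemidef := (psd_smul_s16 hA ht0).add (psd_smul_s16 hB ht1')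
  rw [sLagOp, sLagOp, sLagOp, dif_pos hA.1, dif_pos hB.1, dif_pos hC.1]
  set u := hC.1.eigenvectorBasis
  -- eigenvalues of C as quadratic forms
  have heig : ∀ i, hC.1.eigenvalues i =
      ⟪u i, Matrix.toEuclideanLin (t • A + (1 - t) • B) (u i)⟫ := by
    intro i
    rw [toEuclideanLin_eigen hC.1 i, inner_smul_right, real_inner_self_eq_norm_sq,
      u.orthonormal.1 i]
    simp
  have hsplit : ∀ i, ⟪u i, Matrix.toEuclideanLin (t • A + (1 - t) • B) (u i)⟫ =
      t * ⟪u i, Matrix.toEuclideanLin A (u i)⟫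
        + (1 - t) * ⟪u i, Matrix.toEuclideanLin B (u i)⟫ := by
    intro i
    rw [map_add, _root_.map_smul, _root_.map_smul]
    simp only [LinearMap.add_apply, LinearMap.smul_apply, inner_add_right, inner_smul_right]
  have hqa : ∀ (M : Matrix (Fin n) (Fin n) ℝ) (hM : M.PosSemidef) (i : Fin n),
      ⟪u i, Matrix.toEuclideanLin M (u i)⟫ ∈ Set.Ici (0:ℝ) := by
    intro M hM i
    rw [quad_expand hM.1]
    exact Finset.sum_nonneg fun j _ => mul_nonneg (hM.eigenvalues_nonneg j) (sq_nonneg _)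
  have step1 : t * (∑ i, Real.arctan ⟪u i, Matrix.toEuclideanLin A (u i)⟫)
      + (1 - t) * (∑ i, Real.arctan ⟪u i, Matrix.toEuclideanLin B (u i)⟫)
      ≤ ∑ i, Real.arctan (hC.1.eigenvalues i) := by
    rw [Finset.mul_sum, Finset.mul_sum, ← Finset.sum_add_distrib]
    refine Finset.sum_le_sum fun i _ => ?_
    rw [heig i, hsplit i]
    have := arctan_concaveOn.2 (hqa A hA i) (hqa B hB i) ht0 ht1' (by ring)
    simpa [smul_eq_mul] using this
  have stepA := key_ineq hA u
  have stepB := key_ineq hB u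
  have := add_le_add (mul_le_mul_of_nonneg_left stepA ht0)
    (mul_le_mul_of_nonneg_left stepB ht1')
  exact this.trans step1
end
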